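/- Fix w : (0,1) → ℝ, w(x) = √(x(1−x)). The map μ ↦ φ*(μ) defined piecewise by Algorithm 2 of the paper (iteratively remove from the candidate set the index maximizing w(μ_ℓ) while Σ_{ℓ∈S} w(μ_ℓ) < (|S|−1)·max_{ℓ'∈S} w(μ_{ℓ'}), then output φ*_ℓ = (Σ_{ℓ'∈S} w(μ_{ℓ'}) − (|S|−1)w(μ_ℓ))/Σ_{ℓ'∈S} w(μ_{ℓ'}) for ℓ ∈ S and φ*_ℓ = 0 otherwise) is continuous at every μ ∈ (0,1)^L: changing the strict inequality in the elimination condition to a non-strict one yields the same output vector. -/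

import Mathlib

open Finset
open scoped Classical

/-- Iterative elimination of Algorithm 2: while the candidate set S satisfies
Σ_{ℓ∈S} w ℓ < (|S|−1)·max_{ℓ∈S} w ℓ (strict version; ≤ for the non-strict version),
remove from S (a canonical choice of) the index maximizing w. -/
noncomputable def elimSet {L : ℕ} (w : Fin L → ℝ) (strict : Bool)
    (S : Finset (Fin L)) : Finset (Fin L) :=
  if h : S.Nonempty then
    if (if strict then ∑ ℓ ∈ S, w ℓ < ((S.card : ℝ) - 1) * S.sup' h w
        else ∑ ℓ ∈ S, w ℓ ≤ ((S.card : ℝ) - 1) * S.sup' h w) then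
      elimSet w strict
        (S.erase ((S.filter (fun ℓ => w ℓ = S.sup' h w)).min'
          (by
            obtain ⟨ℓ, hℓ, heq⟩ := Finset.exists_mem_eq_sup' h w
            exact ⟨ℓ, Finset.mem_filter.mpr ⟨hℓ, heq.symm⟩⟩)))
    else S
  else S
termination_by S.card
decreasing_by
  exact Finset.card_erase_lt_of_mem (Finset.mem_of_mem_filter _ (Finset.min'_mem _ _))

/-- The allocation produced from a final candidate set S:
φ_ℓ = (Σ_{ℓ'∈S} w ℓ' − (|S|−1)·w ℓ)/Σ_{ℓ'∈S} w ℓ' for ℓ ∈ S, and 0 otherwise. -/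
noncomputable def alloc {L : ℕ} (w : Fin L → ℝ) (S : Finset (Fin L)) : Fin L → ℝ :=
  fun ℓ => if ℓ ∈ S then
    (∑ ℓ' ∈ S, w ℓ' - ((S.card : ℝ) - 1) * w ℓ) / ∑ ℓ' ∈ S, w ℓ'
  else 0

/-- The A-optimal allocation map of Algorithm 2 with w(x) = √(x(1−x)). -/
noncomputable def phiStar {L : ℕ} (strict : Bool) (μ : Fin L → ℝ) : Fin L → ℝ :=
  alloc (fun ℓ => Real.sqrt (μ ℓ * (1 - μ ℓ)))
    (elimSet (fun ℓ => Real.sqrt (μ ℓ * (1 - μ ℓ))) strict Finset.univ)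


theorem key {L : ℕ} (w : Fin L → ℝ) (strict : Bool) :
    ∀ n (S : Finset (Fin L)), S.card = n → (∀ ℓ ∈ S, 0 < w ℓ) → S.Nonempty →
      (elimSet w strict S).Nonempty ∧ elimSet w strict S ⊆ S ∧
      (∀ ℓ ∈ elimSet w strict S,
        (((elimSet w strict S).card : ℝ) - 1) * w ℓ ≤ ∑ ℓ' ∈ elimSet w strict S, w ℓ') ∧
      (∀ ℓ ∈ S, ℓ ∉ elimSet w strict S →
        ∑ ℓ' ∈ elimSet w strict S, w ℓ' ≤ (((elimSet w strict S).card : ℝ) - 1) * w ℓ) := by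
  intro n
  induction n using Nat.strong_induction_on with
  | _ n IH =>
    intro S hcard hpos hne
    by_cases hcond : (if strict then ∑ ℓ ∈ S, w ℓ < ((S.card : ℝ) - 1) * S.sup' hne w
        else ∑ ℓ ∈ S, w ℓ ≤ ((S.card : ℝ) - 1) * S.sup' hne w)
    · -- removal case
      rw [elimSet, dif_pos hne, if_pos hcond]
      set m := ((S.filter (fun ℓ => w ℓ = S.sup' hne w)).min'
          (by
            obtain ⟨ℓ, hℓ, heq⟩ := Finset.exists_mem_eq_sup' hne w
            exact ⟨ℓ, Finset.mem_filter.mpr ⟨hℓ, heq.symm⟩⟩)) with hm_def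
      have hm_filter : m ∈ S.filter (fun ℓ => w ℓ = S.sup' hne w) := by
        rw [hm_def]
        exact Finset.min'_mem _ _
      rw [Finset.mem_filter] at hm_filter
      obtain ⟨hmS, hwm⟩ := hm_filter
      have hle : ∑ ℓ ∈ S, w ℓ ≤ ((S.card : ℝ) - 1) * w m := by
        rw [hwm]; cases strict
        · simpa using hcond
        · exact le_of_lt (by simpa using hcond)
      have hsum_pos : 0 < ∑ ℓ ∈ S, w ℓ := Finset.sum_pos hpos hne
      have hwm_pos : 0 < w m := hpos m hmS
      have hc2 : 2 ≤ S.card := by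
        by_contra hlt
        push_neg at hlt
        have h1 : S.card = 1 := by
          have := Finset.card_pos.mpr hne; omega
        rw [h1] at hle
        norm_num at hle
        linarith
      have hne' : (S.erase m).Nonempty := by
        rw [← Finset.card_pos, Finset.card_erase_of_mem hmS]
        omega
      have hpos' : ∀ ℓ ∈ S.erase m, 0 < w ℓ := fun ℓ hℓ => hpos ℓ (Finset.mem_of_mem_erase hℓ)
      have hcard' : (S.erase m).card < n := by
        rw [Finset.card_erase_of_mem hmS]; omega
      obtain ⟨Tne, Tsub, hin, hout⟩ := IH _ hcard' (S.erase m) rfl hpos' hne'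
      set T := elimSet w strict (S.erase m) with hT
      refine ⟨Tne, Tsub.trans (Finset.erase_subset _ _), hin, ?_⟩
      intro ℓ hℓS hℓT
      by_cases hℓm : ℓ = m
      · subst hℓm
        have hsum_erase : ∑ x ∈ S.erase m, w x + w m = ∑ x ∈ S, w x :=
          Finset.sum_erase_add S w hmS
        have hS'le : ∑ x ∈ S.erase m, w x ≤ (((S.erase m).card : ℝ) - 1) * w m := by
          have hcc : (((S.erase m).card : ℝ)) = (S.card : ℝ) - 1 := by
            rw [Finset.card_erase_of_mem hmS]
            have h1 : 1 ≤ S.card := by omega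
            push_cast [h1]
            ring
          rw [hcc]
          linarith
        by_cases hTS : S.erase m ⊆ T
        · have hTeq : T = S.erase m := Finset.Subset.antisymm Tsub hTS
          rw [hTeq]
          exact hS'le
        · obtain ⟨ℓ', hℓ'S, hℓ'T⟩ := Finset.not_subset.mp hTS
          have h1 := hout ℓ' hℓ'S hℓ'T
          have hle' : w ℓ' ≤ w m := by
            rw [hwm]
            exact Finset.le_sup' w (Finset.mem_of_mem_erase hℓ'S)
          have hcT : (1:ℝ) ≤ T.card := by
            exact_mod_cast Finset.card_pos.mpr Tne
          nlinarith [mul_nonneg (by linarith : (0:ℝ) ≤ (T.card:ℝ) - 1)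
            (by linarith : (0:ℝ) ≤ w m - w ℓ')]
      · exact hout ℓ (Finset.mem_erase.mpr ⟨hℓm, hℓS⟩) hℓT
    · -- stop case
      rw [elimSet, dif_pos hne, if_neg hcond]
      have hge : ((S.card : ℝ) - 1) * S.sup' hne w ≤ ∑ ℓ ∈ S, w ℓ := by
        cases strict
        · exact le_of_lt (by simpa using hcond)
        · simpa using hcond
      refine ⟨hne, Finset.Subset.refl _, ?_, ?_⟩
      · intro ℓ hℓ
        have h1 : w ℓ ≤ S.sup' hne w := Finset.le_sup' w hℓ
        have hc1 : (1:ℝ) ≤ S.card := by exact_mod_cast Finset.card_pos.mpr hne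
        nlinarith [mul_nonneg (by linarith : (0:ℝ) ≤ (S.card:ℝ) - 1)
          (by linarith : (0:ℝ) ≤ S.sup' hne w - w ℓ)]
      · intro ℓ hℓS hℓT
        exact absurd hℓS hℓT

noncomputable def gSum {L : ℕ} (w : Fin L → ℝ) (lam : ℝ) : ℝ :=
  ∑ ℓ, max 0 (1 - lam * w ℓ)

theorem gSum_mono {L : ℕ} (w : Fin L → ℝ) (hw : ∀ ℓ, 0 ≤ w ℓ) {a b : ℝ} (hab : a ≤ b) :
    gSum w b ≤ gSum w a := by
  apply Finset.sum_le_sum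
  intro ℓ _
  exact max_le_max le_rfl (by nlinarith [hw ℓ])

theorem gSum_strict {L : ℕ} (w : Fin L → ℝ) (hw : ∀ ℓ, 0 < w ℓ) {a b : ℝ} (hab : a < b)
    (hpos : 0 < gSum w a) : gSum w b < gSum w a := by
  have hterm : ∃ ℓ : Fin L, 0 < 1 - a * w ℓ := by
    by_contra h
    push_neg at h
    have : gSum w a = 0 := by
      unfold gSum
      apply Finset.sum_eq_zero
      intro ℓ _
      exact max_eq_left (h ℓ)
    rw [this] at hpos
    exact lt_irrefl _ hpos
  obtain ⟨ℓ₀, hℓ₀⟩ := hterm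
  apply Finset.sum_lt_sum
  · intro ℓ _
    exact max_le_max le_rfl (by nlinarith [(hw ℓ).le])
  · refine ⟨ℓ₀, Finset.mem_univ _, ?_⟩
    have h1 : 1 - b * w ℓ₀ < 1 - a * w ℓ₀ := by nlinarith [hw ℓ₀]
    calc max 0 (1 - b * w ℓ₀) < 1 - a * w ℓ₀ := max_lt hℓ₀ h1
    _ = max 0 (1 - a * w ℓ₀) := (max_eq_right hℓ₀.le).symm

theorem closedForm {L : ℕ} (hL : 2 ≤ L) (w : Fin L → ℝ) (strict : Bool)
    (hw : ∀ ℓ, 0 < w ℓ) :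
    2 ≤ (elimSet w strict Finset.univ).card ∧
    alloc w (elimSet w strict Finset.univ) =
      (fun ℓ => max 0 (1 - ((((elimSet w strict Finset.univ).card : ℝ) - 1) /
        ∑ ℓ' ∈ elimSet w strict Finset.univ, w ℓ') * w ℓ)) ∧
    gSum w ((((elimSet w strict Finset.univ).card : ℝ) - 1) /
        ∑ ℓ' ∈ elimSet w strict Finset.univ, w ℓ') = 1 := by
  haveI : Nonempty (Fin L) := ⟨⟨0, by omega⟩⟩
  obtain ⟨Tne, Tsub, hin, hout⟩ := key w strict (Finset.univ.card) Finset.univ rfl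
    (fun ℓ _ => hw ℓ) (Finset.univ_nonempty)
  set T := elimSet w strict Finset.univ with hT
  have hSpos : 0 < ∑ ℓ' ∈ T, w ℓ' := Finset.sum_pos (fun ℓ _ => hw ℓ) Tne
  set lam := (((T.card : ℝ) - 1) / ∑ ℓ' ∈ T, w ℓ') with hlam
  have hc2 : 2 ≤ T.card := by
    by_cases hTu : T = Finset.univ
    · rw [hTu, Finset.card_univ, Fintype.card_fin]; exact hL
    · have hex : ∃ ℓ, ℓ ∉ T := by
        by_contra h
        push_neg at h
        exact hTu (Finset.eq_univ_iff_forall.mpr h)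
      obtain ⟨ℓ, hℓT⟩ := hex
      have h2 := hout ℓ (Finset.mem_univ ℓ) hℓT
      have hgt : (1:ℝ) < T.card := by
        by_contra hcle
        push_neg at hcle
        have : ((T.card : ℝ) - 1) * w ℓ ≤ 0 :=
          mul_nonpos_of_nonpos_of_nonneg (by linarith) (hw ℓ).le
        linarith
      have : 1 < T.card := by exact_mod_cast hgt
      omega
  have halloc : alloc w T = fun ℓ => max 0 (1 - lam * w ℓ) := by
    funext ℓ
    by_cases hℓ : ℓ ∈ T
    · have h1 := hin ℓ hℓ
      have hle1 : lam * w ℓ ≤ 1 := by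
        rw [hlam, div_mul_eq_mul_div, div_le_one hSpos]
        linarith
      rw [alloc, if_pos hℓ, max_eq_right (by linarith)]
      rw [div_eq_iff hSpos.ne', hlam]
      field_simp
    · have h2 := hout ℓ (Finset.mem_univ ℓ) hℓ
      have hge1 : 1 ≤ lam * w ℓ := by
        rw [hlam, div_mul_eq_mul_div, le_div_iff₀ hSpos]
        linarith
      rw [alloc, if_neg hℓ, max_eq_left (by linarith)]
  refine ⟨hc2, halloc, ?_⟩
  have hsum : gSum w lam = ∑ ℓ ∈ T, alloc w T ℓ := by
    unfold gSum
    rw [halloc]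
    rw [Finset.sum_subset (Finset.subset_univ T)]
    intro x _ hx
    rw [← congrFun halloc x, alloc, if_neg hx]
  rw [hsum]
  have : ∑ ℓ ∈ T, alloc w T ℓ
      = ∑ ℓ ∈ T, (∑ ℓ' ∈ T, w ℓ' - ((T.card : ℝ) - 1) * w ℓ) / ∑ ℓ' ∈ T, w ℓ' := by
    apply Finset.sum_congr rfl
    intro ℓ hℓ
    rw [alloc, if_pos hℓ]
  rw [this, ← Finset.sum_div, Finset.sum_sub_distrib, Finset.sum_const, ← Finset.mul_sum,
    nsmul_eq_mul]
  field_simp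
  ring

theorem gSum_inj {L : ℕ} (w : Fin L → ℝ) (hw : ∀ ℓ, 0 < w ℓ) {a b : ℝ}
    (ha : gSum w a = 1) (hb : gSum w b = 1) : a = b := by
  rcases lt_trichotomy a b with h | h | h
  · have := gSum_strict w hw h (by rw [ha]; norm_num)
    rw [ha, hb] at this; linarith
  · exact h
  · have := gSum_strict w hw h (by rw [hb]; norm_num)
    rw [ha, hb] at this; linarith

/-- weights are positive on (0,1)^L -/
theorem wpos {L : ℕ} (μ : Fin L → ℝ) (hμ : ∀ ℓ, μ ℓ ∈ Set.Ioo (0:ℝ) 1) (ℓ : Fin L) :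
    0 < Real.sqrt (μ ℓ * (1 - μ ℓ)) :=
  Real.sqrt_pos.mpr (mul_pos (hμ ℓ).1 (by linarith [(hμ ℓ).2]))

noncomputable def lamAux {L : ℕ} (strict : Bool) (μ : Fin L → ℝ) : ℝ :=
  (((elimSet (fun ℓ => Real.sqrt (μ ℓ * (1 - μ ℓ))) strict Finset.univ).card : ℝ) - 1) /
    ∑ ℓ' ∈ elimSet (fun ℓ => Real.sqrt (μ ℓ * (1 - μ ℓ))) strict Finset.univ,
      Real.sqrt (μ ℓ' * (1 - μ ℓ'))

theorem phi_closed {L : ℕ} (hL : 2 ≤ L) (strict : Bool) (μ : Fin L → ℝ)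
    (hμ : ∀ ℓ, μ ℓ ∈ Set.Ioo (0:ℝ) 1) :
    phiStar strict μ =
      (fun ℓ => max 0 (1 - lamAux strict μ * Real.sqrt (μ ℓ * (1 - μ ℓ)))) ∧
    gSum (fun ℓ => Real.sqrt (μ ℓ * (1 - μ ℓ))) (lamAux strict μ) = 1 := by
  obtain ⟨_, h1, h2⟩ := closedForm hL (fun ℓ => Real.sqrt (μ ℓ * (1 - μ ℓ))) strict (wpos μ hμ)
  exact ⟨h1, h2⟩

theorem lam_eq {L : ℕ} (hL : 2 ≤ L) (μ : Fin L → ℝ)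
    (hμ : ∀ ℓ, μ ℓ ∈ Set.Ioo (0:ℝ) 1) : lamAux true μ = lamAux false μ :=
  gSum_inj _ (wpos μ hμ) (phi_closed hL true μ hμ).2 (phi_closed hL false μ hμ).2

theorem gcont {L : ℕ} (c : ℝ) :
    Continuous (fun μ : Fin L → ℝ => gSum (fun ℓ => Real.sqrt (μ ℓ * (1 - μ ℓ))) c) := by
  unfold gSum
  apply continuous_finset_sum
  intro ℓ _
  exact continuous_const.max (continuous_const.sub (continuous_const.mul
    (Real.continuous_sqrt.comp ((continuous_apply ℓ).mul
      (continuous_const.sub (continuous_apply ℓ))))))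

theorem stmt13 (L : ℕ) (hL : 2 ≤ L) :
    (∀ μ : Fin L → ℝ, (∀ ℓ, μ ℓ ∈ Set.Ioo (0:ℝ) 1) → phiStar true μ = phiStar false μ) ∧
    ContinuousOn (phiStar (L := L) true) {μ | ∀ ℓ, μ ℓ ∈ Set.Ioo (0:ℝ) 1} := by
  constructor
  · intro μ hμ
    rw [(phi_closed hL true μ hμ).1, (phi_closed hL false μ hμ).1, lam_eq hL μ hμ]
  · set U : Set (Fin L → ℝ) := {μ | ∀ ℓ, μ ℓ ∈ Set.Ioo (0:ℝ) 1} with hU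
    have hUopen : IsOpen U := by
      have : U = ⋂ ℓ, (fun μ : Fin L → ℝ => μ ℓ) ⁻¹' Set.Ioo (0:ℝ) 1 := by
        ext μ; simp [hU, Set.mem_iInter]
      rw [this]
      exact isOpen_iInter_of_finite fun ℓ => isOpen_Ioo.preimage (continuous_apply ℓ)
    have hlam : ∀ μ₀ ∈ U, ContinuousAt (lamAux (L := L) true) μ₀ := by
      intro μ₀ hμ₀
      rw [ContinuousAt, Metric.tendsto_nhds]
      intro ε hε
      set lam₀ := lamAux true μ₀ with hlam₀
      have hμ₀' : ∀ ℓ, μ₀ ℓ ∈ Set.Ioo (0:ℝ) 1 := hμ₀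
      have hone : gSum (fun ℓ => Real.sqrt (μ₀ ℓ * (1 - μ₀ ℓ))) lam₀ = 1 :=
        (phi_closed hL true μ₀ hμ₀').2
      have h1 : gSum (fun ℓ => Real.sqrt (μ₀ ℓ * (1 - μ₀ ℓ))) (lam₀ + ε) < 1 := by
        have := gSum_strict _ (wpos μ₀ hμ₀') (lt_add_of_pos_right lam₀ hε)
          (by rw [hone]; norm_num)
        rw [hone] at this; exact this
      have h2 : 1 < gSum (fun ℓ => Real.sqrt (μ₀ ℓ * (1 - μ₀ ℓ))) (lam₀ - ε) := by
        have hp : 0 < gSum (fun ℓ => Real.sqrt (μ₀ ℓ * (1 - μ₀ ℓ))) (lam₀ - ε) := by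
          have := gSum_mono _ (fun ℓ => (wpos μ₀ hμ₀' ℓ).le)
            (by linarith : lam₀ - ε ≤ lam₀)
          rw [hone] at this; linarith
        have := gSum_strict _ (wpos μ₀ hμ₀') (by linarith : lam₀ - ε < lam₀) hp
        rw [hone] at this; exact this
      have e1 : ∀ᶠ μ in nhds μ₀,
          gSum (fun ℓ => Real.sqrt (μ ℓ * (1 - μ ℓ))) (lam₀ + ε) < 1 :=
        ((gcont (lam₀ + ε)).tendsto μ₀).eventually_lt_const h1
      have e2 : ∀ᶠ μ in nhds μ₀,
          1 < gSum (fun ℓ => Real.sqrt (μ ℓ * (1 - μ ℓ))) (lam₀ - ε) :=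
        ((gcont (lam₀ - ε)).tendsto μ₀).eventually_const_lt h2
      have e3 : ∀ᶠ μ in nhds μ₀, μ ∈ U := hUopen.mem_nhds hμ₀
      filter_upwards [e1, e2, e3] with μ hg1 hg2 hμU
      have hμ' : ∀ ℓ, μ ℓ ∈ Set.Ioo (0:ℝ) 1 := hμU
      have honeμ : gSum (fun ℓ => Real.sqrt (μ ℓ * (1 - μ ℓ))) (lamAux true μ) = 1 :=
        (phi_closed hL true μ hμ').2
      have hlt1 : lamAux true μ < lam₀ + ε := by
        by_contra hcon
        push_neg at hcon
        have := gSum_mono (fun ℓ => Real.sqrt (μ ℓ * (1 - μ ℓ)))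
          (fun ℓ => (wpos μ hμ' ℓ).le) hcon
        rw [honeμ] at this; linarith
      have hlt2 : lam₀ - ε < lamAux true μ := by
        by_contra hcon
        push_neg at hcon
        have := gSum_mono (fun ℓ => Real.sqrt (μ ℓ * (1 - μ ℓ)))
          (fun ℓ => (wpos μ hμ' ℓ).le) hcon
        rw [honeμ] at this; linarith
      rw [Real.dist_eq, abs_lt]
      constructor <;> linarith
    apply continuousOn_of_forall_continuousAt
    intro μ₀ hμ₀
    have hF : ContinuousAt (fun μ : Fin L → ℝ =>
        (fun ℓ => max 0 (1 - lamAux true μ * Real.sqrt (μ ℓ * (1 - μ ℓ))))) μ₀ := by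
      rw [continuousAt_pi]
      intro ℓ
      exact continuousAt_const.max (continuousAt_const.sub ((hlam μ₀ hμ₀).mul
        ((Real.continuous_sqrt.continuousAt).comp
          (((continuous_apply ℓ).mul (continuous_const.sub (continuous_apply ℓ))).continuousAt))))
    apply hF.congr
    have : ∀ᶠ μ in nhds μ₀, μ ∈ U := hUopen.mem_nhds hμ₀
    filter_upwards [this] with μ hμU
    exact ((phi_closed hL true μ hμU).1).symm
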